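/- Let A be a compact linear operator between infinite-dimensional Hilbert spaces with singular system (σₙ; vₙ, uₙ), and consider a Petrov–Galerkin discretization Aₙ := Qₙ A Pₙ from finite-dimensional subspaces Xₙ = span{ξ₁,…,ξₙ} to Yₙ = span{η₁,…,ηₙ}, where {ξₖ}, {ηₖ} are arbitrary bases of X, Y. If b ∈ Y satisfies Σₖ |⟨b, uₖ⟩|² / σₖ² = ∞, then ‖Aₙ† Qₙ Q b‖ → ∞, where Q is the orthogonal projection onto cl(R(A)). -/

import Mathlib

noncomputable section
open ContinuousLinearMap Submodule Filter Topology MeasureTheory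
open scoped InnerProductSpace

/-- The orthogonal projection onto the closure of a submodule, as an operator on the ambient
Hilbert space. -/
def projCl {E : Type*} [NormedAddCommGroup E] [InnerProductSpace ℂ E] [CompleteSpace E]
    (K : Submodule ℂ E) : E →L[ℂ] E :=
  haveI : CompleteSpace K.topologicalClosure := K.isClosed_topologicalClosure.completeSpace_coe
  K.topologicalClosure.subtypeL ∘L orthogonalProjection K.topologicalClosure

/-- `P` is the orthogonal projection of `E` onto the subspace `K`:
idempotent, self-adjoint, with range `K`. -/
def IsOrthProj {E : Type*} [NormedAddCommGroup E] [InnerProductSpace ℂ E] [CompleteSpace E]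
    (P : E →L[ℂ] E) (K : Submodule ℂ E) : Prop :=
  P ∘L P = P ∧ ContinuousLinearMap.adjoint P = P ∧ LinearMap.range (P : E →ₗ[ℂ] E) = K

/-- `B` is the Moore–Penrose generalized inverse of `T`. -/
def IsMPInv {E F : Type*} [NormedAddCommGroup E] [InnerProductSpace ℂ E] [CompleteSpace E]
    [NormedAddCommGroup F] [InnerProductSpace ℂ F] [CompleteSpace F]
    (T : E →L[ℂ] F) (B : F →L[ℂ] E) : Prop :=
  T ∘L B ∘L T = T ∧ B ∘L T ∘L B = B ∧
  ContinuousLinearMap.adjoint (T ∘L B) = T ∘L B ∧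
  ContinuousLinearMap.adjoint (B ∘L T) = B ∘L T

/-- `(σ; v, u)` is a singular system of the compact operator `A`:
the `σ n` are positive and tend to `0`, `v` is an orthonormal basis of `N(A)ᗮ = cl R(A*)`,
`u` is an orthonormal basis of `cl R(A)`, and `A x = Σₙ σₙ ⟨x, vₙ⟩ uₙ`. -/
structure IsSingularSystem {X Y : Type*}
    [NormedAddCommGroup X] [InnerProductSpace ℂ X] [CompleteSpace X]
    [NormedAddCommGroup Y] [InnerProductSpace ℂ Y] [CompleteSpace Y]
    (A : X →L[ℂ] Y) (σ : ℕ → ℝ) (v : ℕ → X) (u : ℕ → Y) : Prop where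
  compact : IsCompactOperator A
  pos : ∀ n, 0 < σ n
  tendsto_zero : Tendsto σ atTop (nhds 0)
  orthonormal_v : Orthonormal ℂ v
  orthonormal_u : Orthonormal ℂ u
  dense_v : (span ℂ (Set.range v)).topologicalClosure = (LinearMap.ker (A : X →ₗ[ℂ] Y))ᗮ
  dense_u : (span ℂ (Set.range u)).topologicalClosure = (LinearMap.range (A : X →ₗ[ℂ] Y)).topologicalClosure
  svd : ∀ x : X, A x = ∑' n, ((σ n : ℂ) * ⟪v n, x⟫_ℂ) • u n

/-- An idempotent self-adjoint operator is a contraction. -/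
lemma contraction_of_proj {E : Type*} [NormedAddCommGroup E] [InnerProductSpace ℂ E]
    [CompleteSpace E] {P : E →L[ℂ] E} (h1 : P ∘L P = P)
    (h2 : ContinuousLinearMap.adjoint P = P) (y : E) : ‖P y‖ ≤ ‖y‖ := by
  have hPP : P (P y) = P y := by
    conv_lhs => rw [← ContinuousLinearMap.comp_apply, h1]
  have hsq : (‖P y‖ : ℝ) ^ 2 = RCLike.re (⟪P y, P y⟫_ℂ) := (inner_self_eq_norm_sq (𝕜 := ℂ) _).symm
  have hinner : ⟪P y, P y⟫_ℂ = ⟪y, P y⟫_ℂ := by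
    nth_rewrite 1 [← h2]
    rw [ContinuousLinearMap.adjoint_inner_left, hPP]
  have h3 : ‖P y‖ ^ 2 ≤ ‖y‖ * ‖P y‖ := by
    rw [hsq, hinner]
    calc RCLike.re (⟪y, P y⟫_ℂ) ≤ |RCLike.re (⟪y, P y⟫_ℂ)| := le_abs_self _
      _ ≤ ‖⟪y, P y⟫_ℂ‖ := RCLike.abs_re_le_norm _
      _ ≤ ‖y‖ * ‖P y‖ := norm_inner_le_norm _ _
  nlinarith [norm_nonneg (P y), norm_nonneg y]

/-- Varying contractions converging strongly map converging sequences to the limit. -/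
lemma proj_tendsto {E : Type*} [NormedAddCommGroup E] [InnerProductSpace ℂ E]
    {T : ℕ → E →L[ℂ] E} (hT : ∀ n y, ‖T n y‖ ≤ ‖y‖)
    {c : ℕ → E} {a : E} (hc : Tendsto c atTop (nhds a))
    (ha : Tendsto (fun n => T n a) atTop (nhds a)) :
    Tendsto (fun n => T n (c n)) atTop (nhds a) := by
  have h0 : Tendsto (fun n => ‖c n - a‖ + ‖T n a - a‖) atTop (nhds 0) := by
    have h1 := tendsto_iff_norm_sub_tendsto_zero.1 hc
    have h2 := tendsto_iff_norm_sub_tendsto_zero.1 ha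
    simpa using h1.add h2
  rw [tendsto_iff_norm_sub_tendsto_zero]
  refine squeeze_zero (fun n => norm_nonneg _) (fun n => ?_) h0
  have h : T n (c n) - a = T n (c n - a) + (T n a - a) := by rw [map_sub]; abel
  rw [h]
  exact (norm_add_le _ _).trans (add_le_add (hT n _) le_rfl)

/-- Theorem 4.1 (1): for a compact operator with singular system `(σ; v, u)`
and a Petrov–Galerkin discretization from spans of the first `n` elements of arbitrary bases,
if `Σₖ |⟨b,uₖ⟩|²/σₖ² = ∞` then `‖Aₙ† Qₙ Q_{cl R(A)} b‖ → ∞`. -/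
theorem stmt8 {X Y : Type*} [NormedAddCommGroup X] [InnerProductSpace ℂ X] [CompleteSpace X]
    [NormedAddCommGroup Y] [InnerProductSpace ℂ Y] [CompleteSpace Y]
    (hX : ¬ FiniteDimensional ℂ X) (hY : ¬ FiniteDimensional ℂ Y)
    (A : X →L[ℂ] Y) (σ : ℕ → ℝ) (v : ℕ → X) (u : ℕ → Y)
    (hsys : IsSingularSystem A σ v u)
    (ξ : ℕ → X) (η : ℕ → Y)
    (P : ℕ → X →L[ℂ] X) (Q : ℕ → Y →L[ℂ] Y)
    (hP : ∀ n, IsOrthProj (P n) (span ℂ (ξ '' Set.Iio n)))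
    (hQ : ∀ n, IsOrthProj (Q n) (span ℂ (η '' Set.Iio n)))
    (hPconv : ∀ x : X, Filter.Tendsto (fun n => P n x) atTop (nhds x))
    (hQconv : ∀ y : Y, Filter.Tendsto (fun n => Q n y) atTop (nhds y))
    (An : ℕ → X →L[ℂ] Y) (hAn : ∀ n, An n = Q n ∘L A ∘L P n)
    (B : ℕ → Y →L[ℂ] X) (hB : ∀ n, IsMPInv (An n) (B n))
    (b : Y) (hb : ¬ Summable (fun k => ‖⟪u k, b⟫_ℂ‖ ^ 2 / σ k ^ 2)) :
    Filter.Tendsto (fun n => ‖B n (Q n (projCl (LinearMap.range (A : X →ₗ[ℂ] Y)) b))‖) atTop atTop := by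
  classical
  by_contra hcon
  haveI : CompleteSpace (LinearMap.range (A : X →ₗ[ℂ] Y)).topologicalClosure :=
    (LinearMap.range (A : X →ₗ[ℂ] Y)).isClosed_topologicalClosure.completeSpace_coe
  set Qb : Y := projCl (LinearMap.range (A : X →ₗ[ℂ] Y)) b with hQbdef
  -- basic properties of the projections
  have hQle : ∀ n (y : Y), ‖Q n y‖ ≤ ‖y‖ := fun n => contraction_of_proj (hQ n).1 (hQ n).2.1
  have hPle : ∀ n (z : X), ‖P n z‖ ≤ ‖z‖ := fun n => contraction_of_proj (hP n).1 (hP n).2.1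
  have hPidem : ∀ n (z : X), P n (P n z) = P n z := fun n z => by
    conv_lhs => rw [← ContinuousLinearMap.comp_apply, (hP n).1]
  have hQidem : ∀ n (y : Y), Q n (Q n y) = Q n y := fun n y => by
    conv_lhs => rw [← ContinuousLinearMap.comp_apply, (hQ n).1]
  have hvite := orthonormal_iff_ite.mp hsys.orthonormal_v
  have huite := orthonormal_iff_ite.mp hsys.orthonormal_u
  -- action of A and A* on the singular vectors
  have hAv : ∀ k, A (v k) = (σ k : ℂ) • u k := by
    intro k
    rw [hsys.svd (v k), tsum_eq_single k ?_]
    · rw [hvite k k]; simp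
    · intro n hn; rw [hvite n k]; simp [hn]
  obtain ⟨M, hM⟩ : BddAbove (Set.range fun n => |σ n|) := (hsys.tendsto_zero.abs).bddAbove_range
  have hMle : ∀ n, |σ n| ≤ M := fun n => hM ⟨n, rfl⟩
  have hAsum : ∀ w : X, HasSum (fun n => ((σ n : ℂ) * ⟪v n, w⟫_ℂ) • u n) (A w) := by
    intro w
    have hs2 : Summable fun n => ‖(σ n : ℂ) * ⟪v n, w⟫_ℂ‖ ^ 2 := by
      refine Summable.of_nonneg_of_le (fun n => sq_nonneg _) (fun n => ?_)
        ((hsys.orthonormal_v.inner_products_summable w).mul_left (M ^ 2))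
      have h1 : ‖(σ n : ℂ) * ⟪v n, w⟫_ℂ‖ ≤ M * ‖⟪v n, w⟫_ℂ‖ := by
        rw [norm_mul, Complex.norm_real]
        exact mul_le_mul_of_nonneg_right (by simpa using hMle n) (norm_nonneg _)
      calc ‖(σ n : ℂ) * ⟪v n, w⟫_ℂ‖ ^ 2 ≤ (M * ‖⟪v n, w⟫_ℂ‖) ^ 2 :=
            pow_le_pow_left₀ (norm_nonneg _) h1 2
        _ = M ^ 2 * ‖⟪v n, w⟫_ℂ‖ ^ 2 := by ring
    have hiff := hsys.orthonormal_u.orthogonalFamily.summable_iff_norm_sq_summable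
      (fun n => (σ n : ℂ) * ⟪v n, w⟫_ℂ)
    simp only [LinearIsometry.toSpanSingleton_apply] at hiff
    have hsummable : Summable (fun n => ((σ n : ℂ) * ⟪v n, w⟫_ℂ) • u n) := hiff.mpr hs2
    have := hsummable.hasSum
    rwa [← hsys.svd w] at this
  have hA'u : ∀ k, ContinuousLinearMap.adjoint A (u k) = (σ k : ℂ) • v k := by
    intro k
    apply ext_inner_right ℂ
    intro w
    rw [ContinuousLinearMap.adjoint_inner_left]
    have h1 : HasSum (fun n => ⟪u k, ((σ n : ℂ) * ⟪v n, w⟫_ℂ) • u n⟫_ℂ) ⟪u k, A w⟫_ℂ :=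
      (innerSL ℂ (u k)).hasSum (hAsum w)
    have h2 : ⟪u k, A w⟫_ℂ = (σ k : ℂ) * ⟪v k, w⟫_ℂ := by
      rw [← h1.tsum_eq, tsum_eq_single k ?_]
      · rw [inner_smul_right, huite k k]; simp
      · intro n hn; rw [inner_smul_right, huite k n]; simp [Ne.symm hn]
    rw [h2, inner_smul_left, Complex.conj_ofReal]
  -- `⟪u k, Qb⟫ = ⟪u k, b⟫`
  have hukK : ∀ k, u k ∈ (LinearMap.range (A : X →ₗ[ℂ] Y)).topologicalClosure := by
    intro k
    rw [← hsys.dense_u]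
    exact le_topologicalClosure _ (subset_span (Set.mem_range_self k))
  have hQbproj : Qb = (orthogonalProjection (LinearMap.range (A : X →ₗ[ℂ] Y)).topologicalClosure b : Y) := rfl
  have hQb_inner : ∀ k, ⟪u k, Qb⟫_ℂ = ⟪u k, b⟫_ℂ := by
    intro k
    have hmem : b - Qb ∈ ((LinearMap.range (A : X →ₗ[ℂ] Y)).topologicalClosure)ᗮ := by
      rw [hQbproj]
      exact sub_starProjection_mem_orthogonal b
    have h0 : ⟪u k, b - Qb⟫_ℂ = 0 :=
      (Submodule.mem_orthogonal _ _).1 hmem (u k) (hukK k)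
    rw [inner_sub_right] at h0
    exact (sub_eq_zero.mp h0).symm
  -- pointwise formulas for `An` and its adjoint
  have hAn_apply : ∀ n z, An n z = Q n (A (P n z)) := fun n z => by rw [hAn n]; rfl
  have hAdjAn : ∀ n (y : Y), ContinuousLinearMap.adjoint (An n) y
      = P n (ContinuousLinearMap.adjoint A (Q n y)) := by
    intro n y
    rw [hAn n, ContinuousLinearMap.adjoint_comp, ContinuousLinearMap.adjoint_comp,
      (hP n).2.1, (hQ n).2.1]
    rfl
  -- the Moore–Penrose orthogonality relation
  have hkey : ∀ n (w : Y) (z : X), ⟪An n z, An n (B n w)⟫_ℂ = ⟪An n z, w⟫_ℂ := by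
    intro n w z
    have h1 : (An n ∘L B n) ∘L An n = An n := by
      rw [ContinuousLinearMap.comp_assoc]; exact (hB n).1
    have hop : ContinuousLinearMap.adjoint (An n) ∘L (An n ∘L B n)
        = ContinuousLinearMap.adjoint (An n) := by
      calc ContinuousLinearMap.adjoint (An n) ∘L (An n ∘L B n)
          = ContinuousLinearMap.adjoint (An n) ∘L ContinuousLinearMap.adjoint (An n ∘L B n) := by
            rw [(hB n).2.2.1]
        _ = ContinuousLinearMap.adjoint ((An n ∘L B n) ∘L An n) :=
            (ContinuousLinearMap.adjoint_comp _ _).symm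
        _ = ContinuousLinearMap.adjoint (An n) := by rw [h1]
    have hpt : ContinuousLinearMap.adjoint (An n) (An n (B n w))
        = ContinuousLinearMap.adjoint (An n) w := ContinuousLinearMap.ext_iff.mp hop w
    calc ⟪An n z, An n (B n w)⟫_ℂ
        = ⟪z, ContinuousLinearMap.adjoint (An n) (An n (B n w))⟫_ℂ :=
          (ContinuousLinearMap.adjoint_inner_right _ _ _).symm
      _ = ⟪z, ContinuousLinearMap.adjoint (An n) w⟫_ℂ := by rw [hpt]
      _ = ⟪An n z, w⟫_ℂ := ContinuousLinearMap.adjoint_inner_right _ _ _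
  -- the test sequences e, g and their limits
  set e : ℕ → ℕ → Y := fun k n => An n (P n (v k)) with hedef
  have heQ : ∀ k n, Q n (e k n) = e k n := by
    intro k n
    simp only [hedef, hAn_apply]
    exact hQidem n _
  have he_lim : ∀ k, Tendsto (fun n => e k n) atTop (nhds ((σ k : ℂ) • u k)) := by
    intro k
    have h1 : Tendsto (fun n => A (P n (v k))) atTop (nhds (A (v k))) :=
      (A.continuous.tendsto _).comp (hPconv (v k))
    rw [hAv k] at h1
    have h2 := proj_tendsto hQle h1 (hQconv ((σ k : ℂ) • u k))
    refine h2.congr fun n => ?_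
    simp only [hedef, hAn_apply, hPidem]
  have hg_lim : ∀ k, Tendsto (fun n => ContinuousLinearMap.adjoint (An n) (e k n)) atTop
      (nhds (((σ k : ℂ) * (σ k : ℂ)) • v k)) := by
    intro k
    have h1 : Tendsto (fun n => ContinuousLinearMap.adjoint A (e k n)) atTop
        (nhds (ContinuousLinearMap.adjoint A ((σ k : ℂ) • u k))) :=
      ((ContinuousLinearMap.adjoint A).continuous.tendsto _).comp (he_lim k)
    rw [_root_.map_smul, hA'u k, smul_smul] at h1
    have h2 := proj_tendsto hPle h1 (hPconv _)
    refine h2.congr fun n => ?_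
    rw [hAdjAn, heQ]
  -- key identity
  have hid : ∀ k n, ⟪ContinuousLinearMap.adjoint (An n) (e k n), B n (Q n Qb)⟫_ℂ
      = ⟪e k n, Q n Qb⟫_ℂ := by
    intro k n
    rw [ContinuousLinearMap.adjoint_inner_left]
    exact hkey n (Q n Qb) (P n (v k))
  have hRHS : ∀ k, Tendsto (fun n => ⟪e k n, Q n Qb⟫_ℂ) atTop
      (nhds ((σ k : ℂ) * ⟪u k, b⟫_ℂ)) := by
    intro k
    have h : Tendsto (fun n => ⟪e k n, Q n Qb⟫_ℂ) atTop
        (nhds ⟪(σ k : ℂ) • u k, Qb⟫_ℂ) := (he_lim k).inner (hQconv Qb)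
    rwa [inner_smul_left, Complex.conj_ofReal, hQb_inner k] at h
  -- extract a bounded subsequence
  rw [tendsto_atTop] at hcon
  push_neg at hcon
  obtain ⟨C, hC⟩ := hcon
  obtain ⟨φ, hφmono, hφ⟩ := Filter.extraction_of_frequently_atTop hC
  have hφtend : Tendsto φ atTop atTop := hφmono.tendsto_atTop
  -- coefficient limits along the subsequence
  have hcoef : ∀ k, Tendsto (fun j => ⟪v k, B (φ j) (Q (φ j) Qb)⟫_ℂ) atTop
      (nhds (⟪u k, b⟫_ℂ / (σ k : ℂ))) := by
    intro k
    have h1 : Tendsto (fun j => ⟪ContinuousLinearMap.adjoint (An (φ j)) (e k (φ j)),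
        B (φ j) (Q (φ j) Qb)⟫_ℂ) atTop (nhds ((σ k : ℂ) * ⟪u k, b⟫_ℂ)) := by
      refine Tendsto.congr (fun j => (hid k (φ j)).symm) ((hRHS k).comp hφtend)
    have h3 : Tendsto (fun j => ‖ContinuousLinearMap.adjoint (An (φ j)) (e k (φ j))
        - ((σ k : ℂ) * (σ k : ℂ)) • v k‖) atTop (nhds 0) :=
      tendsto_iff_norm_sub_tendsto_zero.1 ((hg_lim k).comp hφtend)
    have h2 : Tendsto (fun j => ⟪ContinuousLinearMap.adjoint (An (φ j)) (e k (φ j))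
        - ((σ k : ℂ) * (σ k : ℂ)) • v k, B (φ j) (Q (φ j) Qb)⟫_ℂ) atTop (nhds 0) := by
      refine squeeze_zero_norm (fun j => ?_) (by simpa using h3.mul_const C)
      exact (norm_inner_le_norm _ _).trans
        (mul_le_mul_of_nonneg_left (hφ j).le (norm_nonneg _))
    have h4 : Tendsto (fun j => ⟪((σ k : ℂ) * (σ k : ℂ)) • v k,
        B (φ j) (Q (φ j) Qb)⟫_ℂ) atTop (nhds ((σ k : ℂ) * ⟪u k, b⟫_ℂ)) := by
      have h5 := h1.sub h2
      simp only [inner_sub_left, sub_sub_cancel, sub_zero] at h5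
      exact h5
    have h5 : Tendsto (fun j => ((σ k : ℂ) * (σ k : ℂ)) * ⟪v k, B (φ j) (Q (φ j) Qb)⟫_ℂ)
        atTop (nhds ((σ k : ℂ) * ⟪u k, b⟫_ℂ)) := by
      refine h4.congr fun j => ?_
      rw [inner_smul_left, map_mul, Complex.conj_ofReal]
    have hσk : (σ k : ℂ) ≠ 0 := by exact_mod_cast (hsys.pos k).ne'
    have h6 := h5.const_mul (((σ k : ℂ) * (σ k : ℂ))⁻¹)
    have he1 : (fun j => ((σ k : ℂ) * (σ k : ℂ))⁻¹
        * (((σ k : ℂ) * (σ k : ℂ)) * ⟪v k, B (φ j) (Q (φ j) Qb)⟫_ℂ))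
        = fun j => ⟪v k, B (φ j) (Q (φ j) Qb)⟫_ℂ := by
      funext j; field_simp
    have he2 : ((σ k : ℂ) * (σ k : ℂ))⁻¹ * ((σ k : ℂ) * ⟪u k, b⟫_ℂ)
        = ⟪u k, b⟫_ℂ / (σ k : ℂ) := by
      field_simp
    rw [he1, he2] at h6
    exact h6
  -- partial sums are bounded, contradiction with `hb`
  have hsum : ∀ N : ℕ, ∑ k ∈ Finset.range N, ‖⟪u k, b⟫_ℂ‖ ^ 2 / σ k ^ 2 ≤ C ^ 2 := by
    intro N
    have hlim : Tendsto (fun j => ∑ k ∈ Finset.range N, ‖⟪v k, B (φ j) (Q (φ j) Qb)⟫_ℂ‖ ^ 2)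
        atTop (nhds (∑ k ∈ Finset.range N, ‖⟪u k, b⟫_ℂ / (σ k : ℂ)‖ ^ 2)) :=
      tendsto_finset_sum _ fun k _ => ((hcoef k).norm.pow 2)
    have hle : ∀ j, ∑ k ∈ Finset.range N, ‖⟪v k, B (φ j) (Q (φ j) Qb)⟫_ℂ‖ ^ 2 ≤ C ^ 2 := by
      intro j
      calc ∑ k ∈ Finset.range N, ‖⟪v k, B (φ j) (Q (φ j) Qb)⟫_ℂ‖ ^ 2
          ≤ ‖B (φ j) (Q (φ j) Qb)‖ ^ 2 := hsys.orthonormal_v.sum_inner_products_le _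
        _ ≤ C ^ 2 := by nlinarith [norm_nonneg (B (φ j) (Q (φ j) Qb)), hφ j]
    have hfin := le_of_tendsto hlim (Filter.Eventually.of_forall hle)
    calc ∑ k ∈ Finset.range N, ‖⟪u k, b⟫_ℂ‖ ^ 2 / σ k ^ 2
        = ∑ k ∈ Finset.range N, ‖⟪u k, b⟫_ℂ / (σ k : ℂ)‖ ^ 2 := by
          refine Finset.sum_congr rfl fun k _ => ?_
          rw [norm_div, div_pow, Complex.norm_real, Real.norm_eq_abs,
            abs_of_pos (hsys.pos k)]
      _ ≤ C ^ 2 := hfin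
  exact hb (summable_of_sum_range_le
    (fun k => div_nonneg (sq_nonneg _) (sq_nonneg _)) hsum)
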